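/- Let S, T, U be finite subsets of Fin N and let T_a, T_b, T_c ∈ A be homogeneous with T_a ∈ 𝒜(|S| mod 2), T_b ∈ 𝒜(|T| mod 2), T_c ∈ 𝒜(|U| mod 2). Writing X_S := γ_S ⊗ T_a, X_T := γ_T ⊗ T_b, X_U := γ_U ⊗ T_c, and ⟦x, y⟧_s := x·y - (-1)^s · y·x, the nested graded bracket reduces to the nested supercommutator: ⟦X_S, ⟦X_T, X_U⟧_{|T ∩ U|}⟧_{|S ∩ T| + |S ∩ U|} = (γ_S·γ_T·γ_U) ⊗ (T_a·B - (-1)^{|S|·(|T|+|U|)} · B·T_a), where B := T_b·T_c - (-1)^{|T|·|U|} · T_c·T_b. -/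

import Mathlib

open TensorProduct

/-- The ordered product of Clifford generators `ι (e i)` over `i ∈ S`,
taken in increasing order of indices, with `γ_∅ = 1`. -/
noncomputable def gammaProd {R M : Type*} [CommRing R] [AddCommGroup M] [Module R M]
    (Q : QuadraticForm R M) {N : ℕ} (e : Fin N → M) (S : Finset (Fin N)) :
    CliffordAlgebra Q :=
  ((S.sort (· ≤ ·)).map fun i => CliffordAlgebra.ι Q (e i)).prod

/-- The graded bracket `⟦x, y⟧_s := x·y - (-1)^s · y·x` for `s ∈ ℤ`. -/
noncomputable def gBracket {A : Type*} [Ring A] (s : ℤ) (x y : A) : A :=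
  x * y - (((-1 : ℤˣ) ^ s : ℤˣ) : ℤ) • (y * x)

lemma countP_toList {α : Type*} (p : α → Prop) [DecidablePred p] (S : Finset α) :
    S.toList.countP (fun x => decide (p x)) = (S.filter p).card := by
  rw [Finset.card_def, Finset.filter_val, ← Multiset.countP_eq_card_filter,
    ← Finset.coe_toList, Multiset.coe_countP]

lemma neg_one_pow_congr_mod {a b : ℕ} (h : a % 2 = b % 2) : ((-1:ℤ)^a) = (-1)^b := by
  rw [← Nat.div_add_mod a 2, ← Nat.div_add_mod b 2, pow_add, pow_add, pow_mul, pow_mul]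
  norm_num [h]

section Aux
variable {R M : Type*} [CommRing R] [AddCommGroup M] [Module R M]
    (Q : QuadraticForm R M) {N : ℕ} (e : Fin N → M)
    (horth : ∀ i j : Fin N, i ≠ j → QuadraticMap.polar Q (e i) (e j) = 0)

include horth in
lemma ι_mul_list (i : Fin N) (l : List (Fin N)) :
    CliffordAlgebra.ι Q (e i) * (l.map fun j => CliffordAlgebra.ι Q (e j)).prod =
      ((-1 : ℤ) ^ (l.countP (· ≠ i))) •
        ((l.map fun j => CliffordAlgebra.ι Q (e j)).prod * CliffordAlgebra.ι Q (e i)) := by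
  induction l with
  | nil => simp
  | cons j l ih =>
    simp only [List.map_cons, List.prod_cons, List.countP_cons, ← mul_assoc]
    rcases eq_or_ne j i with rfl | hji
    · have h0 : (l.countP (· ≠ j) + if decide (j ≠ j) = true then 1 else 0)
          = l.countP (· ≠ j) := by simp
      rw [h0]
      conv_lhs => rw [mul_assoc, ih]
      rw [mul_smul_comm, mul_assoc]
    · have h1 : (l.countP (· ≠ i) + if decide (j ≠ i) = true then 1 else 0)
          = l.countP (· ≠ i) + 1 := by simp [hji]
      have hswap : CliffordAlgebra.ι Q (e i) * CliffordAlgebra.ι Q (e j) =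
          -(CliffordAlgebra.ι Q (e j) * CliffordAlgebra.ι Q (e i)) :=
        CliffordAlgebra.ι_mul_ι_comm_of_isOrtho
          ((QuadraticMap.isOrtho_polarBilin (Q := Q)).mp
            (show Q.polarBilin (e i) (e j) = 0 by
              simpa using horth i j (Ne.symm hji)))
      rw [h1, hswap, neg_mul, mul_assoc]
      conv_lhs => rw [ih]
      rw [mul_smul_comm, ← mul_assoc, pow_succ, mul_smul, neg_one_smul, smul_neg]

lemma countP_sort_inter (i : Fin N) (T : Finset (Fin N)) :
    (T.sort (· ≤ ·)).countP (· ≠ i) + (if i ∈ T then 1 else 0) = T.card := by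
  have hperm := Finset.sort_perm_toList T (· ≤ ·)
  rw [hperm.countP_eq]
  have h1 : T.toList.countP (fun x => decide (x ≠ i)) = (T.filter (· ≠ i)).card :=
    countP_toList (· ≠ i) T
  rw [h1, Finset.filter_ne' T i]
  split_ifs with h
  · have := Finset.card_erase_of_mem h
    have : 1 ≤ T.card := Finset.card_pos.mpr ⟨i, h⟩
    rw [Finset.card_erase_of_mem h]
    omega
  · rw [Finset.erase_eq_of_notMem h]; omega

include horth in
lemma list_mul_gamma (l : List (Fin N)) (T : Finset (Fin N)) :
    (l.map fun j => CliffordAlgebra.ι Q (e j)).prod * gammaProd Q e T =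
      ((-1 : ℤ) ^ (l.length * T.card + l.countP (· ∈ T))) •
        (gammaProd Q e T * (l.map fun j => CliffordAlgebra.ι Q (e j)).prod) := by
  induction l with
  | nil => simp
  | cons i l ih =>
    have hι := ι_mul_list Q e horth i (T.sort (· ≤ ·))
    rw [show gammaProd Q e T = ((T.sort (· ≤ ·)).map fun j => CliffordAlgebra.ι Q (e j)).prod
      from rfl] at *
    simp only [List.map_cons, List.prod_cons, List.countP_cons, List.length_cons, mul_assoc]
    rw [ih, mul_smul_comm, ← mul_assoc, hι, smul_mul_assoc, smul_smul, mul_assoc,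
      ← pow_add]
    congr 1
    have hc := countP_sort_inter i T
    apply neg_one_pow_congr_mod
    simp only [decide_eq_true_eq, add_mul, one_mul] at *
    split_ifs at * <;> omega

include horth in
lemma gamma_mul_gamma (S T : Finset (Fin N)) :
    gammaProd Q e S * gammaProd Q e T =
      ((-1 : ℤ) ^ (S.card * T.card + (S ∩ T).card)) • (gammaProd Q e T * gammaProd Q e S) := by
  have h := list_mul_gamma Q e horth (S.sort (· ≤ ·)) T
  rw [show gammaProd Q e S = ((S.sort (· ≤ ·)).map fun j => CliffordAlgebra.ι Q (e j)).prod
    from rfl]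
  rw [h, Finset.length_sort]
  congr 2
  have hperm := Finset.sort_perm_toList S (· ≤ ·)
  rw [hperm.countP_eq]
  rw [countP_toList (· ∈ T) S, Finset.filter_mem_eq_inter]

end Aux

lemma units_pow_cast (n : ℕ) : (((-1 : ℤˣ) ^ (n : ℤ) : ℤˣ) : ℤ) = (-1 : ℤ) ^ n := by
  rw [zpow_natCast, Units.val_pow_eq_pow_val]
  norm_num

section Main
variable {R M : Type*} [CommRing R] [AddCommGroup M] [Module R M]
    (Q : QuadraticForm R M) {N : ℕ} (e : Fin N → M)
    {A : Type*} [Ring A] [Algebra R A]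

open TensorProduct in
lemma tmul_gBracket_aux (g1 g2 : CliffordAlgebra Q) (n12 mN : ℕ)
    (hcomm : g2 * g1 = ((-1 : ℤ) ^ (n12 + mN)) • (g1 * g2)) (x y : A) :
    gBracket (mN : ℤ) (g1 ⊗ₜ[R] x) (g2 ⊗ₜ[R] y) =
      (g1 * g2) ⊗ₜ[R] (x * y - ((-1 : ℤ) ^ n12) • (y * x)) := by
  simp only [gBracket, Algebra.TensorProduct.tmul_mul_tmul, units_pow_cast]
  rw [hcomm, smul_tmul', smul_smul, ← pow_add,
    neg_one_pow_congr_mod (a := mN + (n12 + mN)) (b := n12) (by omega),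
    TensorProduct.tmul_sub, TensorProduct.tmul_smul, ← smul_tmul']

end Main


/-- the nested ℤ₂^N graded bracket in `Cl(Q) ⊗ A` reduces to the nested
supercommutator of the second factors. -/
theorem tensor_nested_graded_bracket {R M : Type*} [CommRing R] [AddCommGroup M] [Module R M]
    (Q : QuadraticForm R M) {N : ℕ} (e : Fin N → M)
    (horth : ∀ i j : Fin N, i ≠ j → QuadraticMap.polar Q (e i) (e j) = 0)
    (A : Type*) [Ring A] [Algebra R A] (𝒜 : ZMod 2 → Submodule R A) [GradedAlgebra 𝒜]
    (S T U : Finset (Fin N)) (Ta Tb Tc : A)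
    (hTa : Ta ∈ 𝒜 ((S.card : ZMod 2))) (hTb : Tb ∈ 𝒜 ((T.card : ZMod 2)))
    (hTc : Tc ∈ 𝒜 ((U.card : ZMod 2))) :
    gBracket (((S ∩ T).card : ℤ) + ((S ∩ U).card : ℤ)) (gammaProd Q e S ⊗ₜ[R] Ta)
        (gBracket ((T ∩ U).card : ℤ) (gammaProd Q e T ⊗ₜ[R] Tb)
          (gammaProd Q e U ⊗ₜ[R] Tc)) =
      (gammaProd Q e S * gammaProd Q e T * gammaProd Q e U) ⊗ₜ[R]
        (Ta * (Tb * Tc - ((-1 : ℤ) ^ (T.card * U.card)) • (Tc * Tb)) -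
          ((-1 : ℤ) ^ (S.card * (T.card + U.card))) •
            ((Tb * Tc - ((-1 : ℤ) ^ (T.card * U.card)) • (Tc * Tb)) * Ta)) := by
  have e1 : gammaProd Q e U * gammaProd Q e S =
      ((-1 : ℤ) ^ (U.card * S.card + (U ∩ S).card)) •
        (gammaProd Q e S * gammaProd Q e U) := gamma_mul_gamma Q e horth U S
  have e2 : gammaProd Q e T * gammaProd Q e S =
      ((-1 : ℤ) ^ (T.card * S.card + (T ∩ S).card)) •
        (gammaProd Q e S * gammaProd Q e T) := gamma_mul_gamma Q e horth T S
  have m3comm : gammaProd Q e U * gammaProd Q e T =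
      ((-1 : ℤ) ^ (T.card * U.card + (T ∩ U).card)) •
        (gammaProd Q e T * gammaProd Q e U) := by
    rw [gamma_mul_gamma Q e horth U T, Finset.inter_comm, Nat.mul_comm]
  have outercomm : (gammaProd Q e T * gammaProd Q e U) * gammaProd Q e S =
      ((-1 : ℤ) ^ (S.card * (T.card + U.card) + ((S ∩ T).card + (S ∩ U).card))) •
        (gammaProd Q e S * (gammaProd Q e T * gammaProd Q e U)) := by
    rw [mul_assoc, e1, mul_smul_comm, ← mul_assoc, e2, smul_mul_assoc, smul_smul, ← pow_add,
      mul_assoc, Finset.inter_comm U S, Finset.inter_comm T S,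
      show (U.card * S.card + (S ∩ U).card + (T.card * S.card + (S ∩ T).card))
        = (S.card * (T.card + U.card) + ((S ∩ T).card + (S ∩ U).card)) from by ring]
  have hs : (((S ∩ T).card : ℤ) + ((S ∩ U).card : ℤ))
      = (((S ∩ T).card + (S ∩ U).card : ℕ) : ℤ) := by push_cast; ring
  rw [hs, tmul_gBracket_aux Q (gammaProd Q e T) (gammaProd Q e U) (T.card * U.card)
      ((T ∩ U).card) m3comm Tb Tc,
    tmul_gBracket_aux Q (gammaProd Q e S) (gammaProd Q e T * gammaProd Q e U)
      (S.card * (T.card + U.card)) ((S ∩ T).card + (S ∩ U).card) outercomm Ta _, ← mul_assoc]
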